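/- Let H(A) = (1/2) |A|². If λ, μ ∈ ℝ^{3×3} satisfy |λ| ≤ 3/2, then g_H(λ, μ) ≥ (1/14) |μ|². In particular, the choice A = (1/7) μ gives μ:A + λ:T(A) − (1/2)|A|² ≥ (1/14)|μ|². -/
import Mathlib


open scoped BigOperators

noncomputable section

/-- `3 × 3` real matrices, as functions of (row, column). -/
abbrev M33 := Fin 3 → Fin 3 → ℝ

/-- The Levi-Civita symbol on indices in `Fin 3`. -/
def eps (i j k : Fin 3) : ℝ :=
  ((i.val : ℝ) - j.val) * ((j.val : ℝ) - k.val) * ((k.val : ℝ) - i.val) / 2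

/-- The contraction `X : Y = Σ_{i,j} X_{ij} Y_{ij}`. -/
def dotM (X Y : M33) : ℝ := ∑ i, ∑ j, X i j * Y i j

/-- `T(A)_{Zp} = ε_{pqr} ε_{ZBC} A_{Bq} A_{Cr}`. -/
def Tmap (A : M33) : M33 :=
  fun Z p => ∑ q, ∑ r, ∑ B, ∑ C, eps p q r * eps Z B C * A B q * A C r

/-- The Frobenius norm on `M33`. -/
def fnorm (A : M33) : ℝ := Real.sqrt (∑ i, ∑ j, (A i j) ^ 2)

/-- `g_H(λ, μ) = sup_{A} ( A:μ + λ:T(A) − H(A) )`, valued in `ℝ ∪ {±∞}` (the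
supremum is never `-∞` since `H` is real-valued). -/
def gH (H : M33 → ℝ) (lam mu : M33) : EReal :=
  ⨆ A : M33, ((dotM A mu + dotM lam (Tmap A) - H A : ℝ) : EReal)


lemma Tsq_id (A : M33) :
    (∑ i, ∑ j, (Tmap A i j)^2) =
      2 * (∑ i, ∑ j, (A i j)^2)^2
        - 2 * ∑ p, ∑ q, (∑ B, A B p * A B q)^2 := by
  simp only [Tmap, eps, Fin.sum_univ_succ, Fin.sum_univ_zero]
  norm_num
  ring

lemma fnorm_sq (A : M33) : fnorm A ^ 2 = ∑ i, ∑ j, (A i j)^2 := by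
  refine Real.sq_sqrt ?_
  positivity

lemma Tmap_smul (c : ℝ) (A : M33) (i j : Fin 3) :
    Tmap (c • A) i j = c^2 * Tmap A i j := by
  simp only [Tmap, Pi.smul_apply, smul_eq_mul, Fin.sum_univ_succ, Fin.sum_univ_zero]
  ring

set_option maxHeartbeats 1000000 in
theorem stmt10 (lam mu : M33) (hlam : fnorm lam ≤ 3 / 2) :
    (((1 / 14) * fnorm mu ^ 2 : ℝ) : EReal) ≤
      gH (fun A => (1 / 2) * fnorm A ^ 2) lam mu ∧
    -- the witness `A = (1/7) μ` realizes the bound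
    (1 / 14) * fnorm mu ^ 2 ≤
      dotM ((1 / 7 : ℝ) • mu) mu + dotM lam (Tmap ((1 / 7 : ℝ) • mu))
        - (1 / 2) * fnorm ((1 / 7 : ℝ) • mu) ^ 2 := by
  set s : ℝ := ∑ i, ∑ j, (mu i j)^2 with hs
  set L : ℝ := ∑ i, ∑ j, (lam i j)^2 with hLdef
  set t : ℝ := dotM lam (Tmap mu) with ht
  have hs0 : 0 ≤ s := by positivity
  have hL : L ≤ 9/4 := by
    have h0 : 0 ≤ L := by positivity
    have := Real.sq_sqrt h0
    have h2 : Real.sqrt L ≤ 3/2 := hlam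
    nlinarith [Real.sqrt_nonneg L]
  -- bound on Σ T²
  have hTs : (∑ i, ∑ j, (Tmap mu i j)^2) ≤ 2 * s^2 := by
    rw [Tsq_id]
    have : 0 ≤ ∑ p, ∑ q, (∑ B, mu B p * mu B q)^2 := by positivity
    linarith
  have hT0 : 0 ≤ ∑ i, ∑ j, (Tmap mu i j)^2 := by positivity
  -- Cauchy-Schwarz
  have hCS : t^2 ≤ L * ∑ i, ∑ j, (Tmap mu i j)^2 := by
    have key := Finset.sum_mul_sq_le_sq_mul_sq Finset.univ
      (fun p : Fin 3 × Fin 3 => lam p.1 p.2) (fun p : Fin 3 × Fin 3 => Tmap mu p.1 p.2)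
    simp only [Fintype.sum_prod_type] at key
    calc t^2 = (∑ i, ∑ j, lam i j * Tmap mu i j)^2 := by rw [ht]; rfl
    _ ≤ (∑ i, ∑ j, (lam i j)^2) * ∑ i, ∑ j, (Tmap mu i j)^2 := by
        simpa [sq] using key
    _ = L * ∑ i, ∑ j, (Tmap mu i j)^2 := rfl
  have ht2 : t^2 ≤ (9/2) * s^2 := by nlinarith
  have htge : -3 * s ≤ t := by nlinarith [sq_nonneg (t + 3*s), sq_nonneg (t - 3*s)]
  -- evaluate the witness
  have e1 : dotM ((1 / 7 : ℝ) • mu) mu = (1/7) * s := by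
    simp only [dotM, Pi.smul_apply, smul_eq_mul, hs, Fin.sum_univ_succ, Fin.sum_univ_zero]
    ring
  have e2 : dotM lam (Tmap ((1 / 7 : ℝ) • mu)) = (1/49) * t := by
    simp only [dotM, ht, Tmap_smul]
    simp only [Fin.sum_univ_succ, Fin.sum_univ_zero]
    ring
  have e3 : fnorm ((1 / 7 : ℝ) • mu) ^ 2 = (1/49) * s := by
    rw [fnorm_sq]
    simp only [Pi.smul_apply, smul_eq_mul, hs, Fin.sum_univ_succ, Fin.sum_univ_zero]
    ring
  have hmain : (1 / 14) * fnorm mu ^ 2 ≤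
      dotM ((1 / 7 : ℝ) • mu) mu + dotM lam (Tmap ((1 / 7 : ℝ) • mu))
        - (1 / 2) * fnorm ((1 / 7 : ℝ) • mu) ^ 2 := by
    rw [e1, e2, e3, fnorm_sq]
    rw [← hs]
    linarith
  refine ⟨?_, hmain⟩
  refine le_trans (EReal.coe_le_coe_iff.mpr hmain) ?_
  exact le_iSup (fun A : M33 => ((dotM A mu + dotM lam (Tmap A) - (1/2) * fnorm A ^ 2 : ℝ) : EReal)) ((1/7 : ℝ) • mu)
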